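/- Let j ≥ 1 be an integer and h ∈ ℝ[X] any polynomial. For all real numbers u ≠ v there exists a unique tuple (a_1,…,a_{j+1}) ∈ ℝ^{j+1} such that the polynomial p = h + Σ_{m=1}^{j+1} a_m X^m satisfies p^{(l)}(u) = 0 for every 1 ≤ l ≤ j and p(u) = p(v). -/

import Mathlib

open Polynomial

noncomputable def Lmap (j : ℕ) : (Fin (j + 1) → ℝ) →ₗ[ℝ] Polynomial ℝ where
  toFun a := ∑ m : Fin (j + 1), C (a m) * X ^ ((m : ℕ) + 1)
  map_add' a b := by
    simp [C_add, add_mul, Finset.sum_add_distrib]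
  map_smul' r a := by
    simp [Finset.mul_sum, smul_eq_C_mul, mul_assoc, C_mul]

noncomputable def Fmap (j : ℕ) (u v : ℝ) : Polynomial ℝ →ₗ[ℝ] (Fin (j + 1) → ℝ) where
  toFun p i := if (i : ℕ) < j then (derivative^[(i : ℕ) + 1] p).eval u else p.eval u - p.eval v
  map_add' p q := by
    funext i
    by_cases hi : (i : ℕ) < j <;>
      simp [hi, ← Module.End.pow_apply, map_add]
    ring
  map_smul' r p := by
    funext i
    by_cases hi : (i : ℕ) < j <;>
      simp [hi, ← Module.End.pow_apply, map_smul]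
    ring

lemma Tinj (j : ℕ) (hj : 1 ≤ j) (u v : ℝ) (huv : u ≠ v) :
    Function.Injective ((Fmap j u v).comp (Lmap j)) := by
  rw [← LinearMap.ker_eq_bot, LinearMap.ker_eq_bot']
  intro a ha
  set q : Polynomial ℝ := ∑ m : Fin (j + 1), C (a m) * X ^ ((m : ℕ) + 1) with hqdef
  have hLa : Lmap j a = q := rfl
  have hcomp : ∀ i : Fin (j + 1),
      (if (i : ℕ) < j then (derivative^[(i : ℕ) + 1] q).eval u else q.eval u - q.eval v) = 0 := by
    intro i
    have := congrFun ha i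
    simpa [Fmap, Lmap, hqdef] using this
  -- derivative conditions
  have hq1 : ∀ l : ℕ, 1 ≤ l → l ≤ j → (derivative^[l] q).eval u = 0 := by
    intro l hl1 hl2
    have hlt : l - 1 < j + 1 := by omega
    have := hcomp ⟨l - 1, hlt⟩
    have hl : l - 1 + 1 = l := by omega
    simpa [show l - 1 < j by omega, hl] using this
  have hq2 : q.eval u = q.eval v := by
    have := hcomp ⟨j, by omega⟩
    simp at this
    linarith [this]
  -- coefficients of q
  have hcoef : ∀ m : Fin (j + 1), q.coeff ((m : ℕ) + 1) = a m := by
    intro m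
    rw [hqdef, finset_sum_coeff]
    rw [Finset.sum_eq_single m]
    · simp
    · intro b _ hb
      have : ¬ ((m : ℕ) + 1 = (b : ℕ) + 1) := by
        simp only [add_left_inj]
        exact fun hc => hb (Fin.ext hc.symm)
      simp [coeff_C_mul, coeff_X_pow, this]
      intro hc; exact absurd (Fin.ext hc).symm hb
    · simp
  have hq0 : q.coeff 0 = 0 := by
    rw [hqdef, finset_sum_coeff]
    apply Finset.sum_eq_zero
    intro b _
    simp [coeff_C_mul, coeff_X_pow]
  have hqdeg : q.natDegree ≤ j + 1 := by
    apply natDegree_sum_le_of_forall_le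
    intro m _
    apply le_trans (natDegree_C_mul_le _ _)
    simp [natDegree_X_pow]
    omega
  -- Taylor expansion at u
  set f : Polynomial ℝ := taylor u q with hfdef
  have hfdeg : f.natDegree ≤ j + 1 := by rw [hfdef, natDegree_taylor]; exact hqdeg
  have hfmid : ∀ l : ℕ, 1 ≤ l → l ≤ j → f.coeff l = 0 := by
    intro l hl1 hl2
    rw [hfdef, taylor_coeff]
    have key : (derivative^[l] q).eval u = (Nat.factorial l : ℝ) * (hasseDeriv l q).eval u := by
      rw [← factorial_smul_hasseDeriv (R := ℝ) l]
      simp [nsmul_eq_mul]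
    have := hq1 l hl1 hl2
    rw [key] at this
    have hfac : (Nat.factorial l : ℝ) ≠ 0 := Nat.cast_ne_zero.mpr (Nat.factorial_ne_zero l)
    exact (mul_eq_zero.mp this).resolve_left hfac
  set c0 := f.coeff 0 with hc0
  set c := f.coeff (j + 1) with hc
  have hf : f = C c0 + C c * X ^ (j + 1) := by
    ext k
    simp only [coeff_add, coeff_C, coeff_C_mul, coeff_X_pow]
    rcases Nat.lt_or_ge k 1 with hk | hk
    · interval_cases k
      simp [hc0, (by omega : ¬ (0 = j + 1))]
    rcases Nat.lt_or_ge k (j + 1) with hk2 | hk2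
    · rw [hfmid k hk (by omega), if_neg (by omega : ¬ k = 0), if_neg (by omega : ¬ k = j + 1)]
      ring
    rcases Nat.lt_or_ge (j + 1) k with hk3 | hk3
    · rw [coeff_eq_zero_of_natDegree_lt (lt_of_le_of_lt hfdeg hk3),
        if_neg (by omega : ¬ k = 0), if_neg (by omega : ¬ k = j + 1)]
      ring
    · have : k = j + 1 := by omega
      subst this
      simp [(by omega : ¬ j + 1 = 0)]
      exact hc.symm
  have heval : ∀ x : ℝ, q.eval x = f.eval (x - u) := by
    intro x
    rw [hfdef, taylor_eval_sub]
  have hc_zero : c = 0 := by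
    have h1 := heval u
    have h2 := heval v
    rw [hf] at h1 h2
    have h1' : q.eval u = c0 := by simpa using h1
    have h2' : q.eval v = c0 + c * (v - u) ^ (j + 1) := by simpa using h2
    have hpow : (v - u) ^ (j + 1) ≠ 0 := pow_ne_zero _ (sub_ne_zero.mpr (Ne.symm huv))
    have hmz : c * (v - u) ^ (j + 1) = 0 := by
      rw [h1', h2'] at hq2; linarith
    exact (mul_eq_zero.mp hmz).resolve_right hpow
  have hc0_zero : c0 = 0 := by
    have h0 : q.coeff 0 = q.eval 0 := (coeff_zero_eq_eval_zero q)
    have := heval 0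
    rw [hf, hc_zero] at this
    simp at this
    rw [hq0] at h0
    rw [this] at h0
    exact h0.symm
  have hfzero : f = 0 := by rw [hf, hc_zero, hc0_zero]; simp
  have hqzero : q = 0 := taylor_injective u (by simpa [hfdef] using hfzero)
  funext m
  have := hcoef m
  rw [hqzero] at this
  simpa using this.symm

theorem stmt7 (j : ℕ) (hj : 1 ≤ j) (h : Polynomial ℝ) (u v : ℝ) (huv : u ≠ v) :
    ∃! a : Fin (j + 1) → ℝ,
      (∀ l : ℕ, 1 ≤ l → l ≤ j →
        (derivative^[l] (h + ∑ m : Fin (j + 1), C (a m) * X ^ ((m : ℕ) + 1))).eval u = 0) ∧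
      (h + ∑ m : Fin (j + 1), C (a m) * X ^ ((m : ℕ) + 1)).eval u =
        (h + ∑ m : Fin (j + 1), C (a m) * X ^ ((m : ℕ) + 1)).eval v := by
  set T := (Fmap j u v).comp (Lmap j) with hT
  have hinj := Tinj j hj u v huv
  have hsurj : Function.Surjective T := LinearMap.injective_iff_surjective.mp hinj
  -- the key iff
  have hiff : ∀ a : Fin (j + 1) → ℝ,
      ((∀ l : ℕ, 1 ≤ l → l ≤ j →
        (derivative^[l] (h + ∑ m : Fin (j + 1), C (a m) * X ^ ((m : ℕ) + 1))).eval u = 0) ∧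
      (h + ∑ m : Fin (j + 1), C (a m) * X ^ ((m : ℕ) + 1)).eval u =
        (h + ∑ m : Fin (j + 1), C (a m) * X ^ ((m : ℕ) + 1)).eval v)
      ↔ T a = -(Fmap j u v h) := by
    intro a
    have hFadd : T a = Fmap j u v (h + Lmap j a) - Fmap j u v h := by
      rw [map_add]; simp [hT]
    constructor
    · rintro ⟨h1, h2⟩
      rw [hFadd]
      have : Fmap j u v (h + Lmap j a) = 0 := by
        funext i
        by_cases hi : (i : ℕ) < j
        · simpa [Fmap, Lmap, hi] using h1 ((i : ℕ) + 1) (by omega) (by omega)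
        · simp only [Fmap, Lmap, hi, if_false, LinearMap.coe_mk, AddHom.coe_mk]
          simpa [sub_eq_zero] using h2
      rw [this]; simp
    · intro hEq
      have hzero : Fmap j u v (h + Lmap j a) = 0 := by
        rw [hFadd] at hEq
        have := sub_eq_neg_self.mp hEq
        exact this
      constructor
      · intro l hl1 hl2
        have hthis := congrFun hzero ⟨l - 1, by omega⟩
        have hl : l - 1 + 1 = l := by omega
        simp only [Fmap, Lmap, LinearMap.coe_mk, AddHom.coe_mk, Pi.zero_apply] at hthis
        rw [if_pos (show ((⟨l - 1, by omega⟩ : Fin (j + 1)) : ℕ) < j by simpa using by omega)] at hthis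
        simpa [hl] using hthis
      · have hthis := congrFun hzero ⟨j, by omega⟩
        simp only [Fmap, Lmap, LinearMap.coe_mk, AddHom.coe_mk, Pi.zero_apply] at hthis
        rw [if_neg (by simp)] at hthis
        simpa [sub_eq_zero] using hthis
  obtain ⟨a0, ha0⟩ := hsurj (-(Fmap j u v h))
  refine ⟨a0, (hiff a0).mpr ha0, fun a' ha' => ?_⟩
  exact hinj (((hiff a').mp ha').trans ha0.symm)
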